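/- For the complete homogeneous and elementary symmetric functions, h_mu = sum over partitions lambda of n of (-1)^{n - ell(lambda)} |B_{lambda,mu}| e_lambda, where |B_{lambda,mu}| is the number of brick tabloids of shape mu and content lambda, n = |mu|, and ell(lambda) is the number of parts of lambda. -/

import Mathlib

/-- The number of brick tabloids of shape `μ` and content `λ`: tilings of the rows of the
Young diagram of `μ` in which every row is partitioned into consecutive nonempty bricks,
such that the multiset of all brick lengths is exactly the multiset of parts of `λ`.
A tabloid is recorded as a list of rows (one ordered list of brick lengths per row of `μ`). -/
noncomputable def brickTabloidCount {n : ℕ} (lam mu : Nat.Partition n) : ℕ :=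
  Nat.card {f : List (List ℕ) //
    f.map List.sum = mu.parts.sort (· ≤ ·) ∧ (∀ b ∈ f.flatten, 0 < b) ∧
      (↑f.flatten : Multiset ℕ) = lam.parts}

set_option linter.unusedSectionVars false

open MvPolynomial Finset

section Helpers
variable {σ : Type*} [Fintype σ] [DecidableEq σ] {R : Type*} [CommRing R]

lemma geom (r : R) :
    (1 - PowerSeries.C r * PowerSeries.X) * PowerSeries.mk (fun k => r ^ k) = 1 := by
  ext n
  cases n with
  | zero => simp
  | succ n => simp [sub_mul, mul_assoc]; ring

lemma coeff_one_sub_C_mul_X (r : R) (m : ℕ) :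
    PowerSeries.coeff m (1 - PowerSeries.C r * PowerSeries.X) =
      if m = 0 then 1 else if m = 1 then -r else 0 := by
  rcases m with _ | _ | m <;> simp [PowerSeries.coeff_one]

lemma toFinsupp_val_apply (t : Finset σ) (a : σ) :
    t.1.toFinsupp a = if a ∈ t then 1 else 0 := by
  rw [Multiset.toFinsupp_apply]
  by_cases h : a ∈ t
  · simp [Multiset.count_eq_one_of_mem t.nodup h, h]
  · simp [Multiset.count_eq_zero_of_notMem h, h]

lemma support_card_of {k : ℕ} (l : σ →₀ ℕ) (h1 : univ.sum l = k) (h3 : ∀ i, l i ≤ 1) :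
    l.support.card = k := by
  have hs : ∑ i ∈ l.support, l i = k :=
    (Finset.sum_subset (Finset.subset_univ _)
      (fun x _ hx => Finsupp.notMem_support_iff.mp hx)).trans h1
  rw [Finset.card_eq_sum_ones]
  rw [Finset.sum_congr rfl (fun x hx => Nat.le_antisymm
    (Nat.one_le_iff_ne_zero.mpr (Finsupp.mem_support_iff.mp hx)) (h3 x))]
  exact hs

lemma coeff_E (k : ℕ) :
    PowerSeries.coeff k
      (∏ i : σ, (1 - PowerSeries.C (X i : MvPolynomial σ R) * PowerSeries.X)) =
      (-1 : MvPolynomial σ R) ^ k * esymm σ R k := by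
  rw [PowerSeries.coeff_prod, esymm, Finset.mul_sum]
  rw [← Finset.sum_filter_of_ne (p := fun l : σ →₀ ℕ => ∀ i, l i ≤ 1)]
  · refine Finset.sum_nbij' (fun l => l.support) (fun t => t.1.toFinsupp) ?_ ?_ ?_ ?_ ?_
    · intro l hl
      simp only [Finset.mem_filter, Finset.mem_finsuppAntidiag] at hl
      rw [Finset.mem_powersetCard]
      exact ⟨Finset.subset_univ _, support_card_of l hl.1.1 hl.2⟩
    · intro t ht
      rw [Finset.mem_powersetCard] at ht
      simp only [Finset.mem_filter, Finset.mem_finsuppAntidiag]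
      refine ⟨⟨?_, Finset.subset_univ _⟩, fun i => by rw [toFinsupp_val_apply]; split <;> simp⟩
      rw [← ht.2, Finset.card_eq_sum_ones]
      rw [Finset.sum_congr rfl (fun x _ => toFinsupp_val_apply t x)]
      simp [Finset.sum_ite_mem]
    · intro l hl
      simp only [Finset.mem_filter, Finset.mem_finsuppAntidiag] at hl
      ext a
      rw [toFinsupp_val_apply]
      by_cases h : a ∈ l.support
      · simp only [h, if_true]
        exact (Nat.le_antisymm (hl.2 a)
          (Nat.one_le_iff_ne_zero.mpr (Finsupp.mem_support_iff.mp h))).symm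
      · simp only [h, if_false]
        exact (Finsupp.notMem_support_iff.mp h).symm
    · intro t ht
      simp [Multiset.toFinsupp_support]
    · intro l hl
      simp only [Finset.mem_filter, Finset.mem_finsuppAntidiag] at hl
      have hcard : l.support.card = k := support_card_of l hl.1.1 hl.2
      calc ∏ i : σ, PowerSeries.coeff (l i) (1 - PowerSeries.C (X i) * PowerSeries.X)
          = ∏ i ∈ l.support, (-(X i : MvPolynomial σ R)) := by
            rw [← Finset.prod_subset (Finset.subset_univ l.support)
              (fun x _ hx => by
                rw [coeff_one_sub_C_mul_X, if_pos (Finsupp.notMem_support_iff.mp hx)])]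
            refine Finset.prod_congr rfl fun x hx => ?_
            have : l x = 1 := Nat.le_antisymm (hl.2 x)
              (Nat.one_le_iff_ne_zero.mpr (Finsupp.mem_support_iff.mp hx))
            rw [coeff_one_sub_C_mul_X, this]
            simp
        _ = ∏ i ∈ l.support, ((-1) * (X i : MvPolynomial σ R)) := by simp
        _ = (-1 : MvPolynomial σ R) ^ k * ∏ i ∈ l.support, X i := by
            rw [Finset.prod_mul_distrib, Finset.prod_const, hcard]
  · intro l hl hne
    by_contra h
    push_neg at h
    obtain ⟨i, hi⟩ := h
    refine hne (Finset.prod_eq_zero (Finset.mem_univ i) ?_)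
    rw [coeff_one_sub_C_mul_X, if_neg (by omega), if_neg (by omega)]

lemma univ_sum_eq_card_toMultiset (l : σ →₀ ℕ) :
    univ.sum l = Multiset.card l.toMultiset := by
  rw [Finsupp.card_toMultiset, Finsupp.sum]
  exact (Finset.sum_subset (Finset.subset_univ _)
    (fun x _ hx => Finsupp.notMem_support_iff.mp hx)).symm

lemma coeff_H (k : ℕ) :
    PowerSeries.coeff k
      (∏ i : σ, PowerSeries.mk fun m => (X i : MvPolynomial σ R) ^ m) = hsymm σ R k := by
  rw [PowerSeries.coeff_prod, hsymm]
  refine Finset.sum_bij'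
    (i := fun l hl => (⟨l.toMultiset, ?_⟩ : Sym σ k))
    (j := fun s _ => s.1.toFinsupp) ?_ ?_ ?_ ?_ ?_
  · rw [← univ_sum_eq_card_toMultiset]
    exact ((Finset.mem_finsuppAntidiag).mp hl).1
  · intro l hl
    exact Finset.mem_univ _
  · intro s hs
    rw [Finset.mem_finsuppAntidiag]
    refine ⟨?_, Finset.subset_univ _⟩
    rw [univ_sum_eq_card_toMultiset, Multiset.toFinsupp_toMultiset]
    exact s.2
  · intro l hl
    simp
  · intro s hs
    exact Sym.coe_injective (by simp)
  · intro l hl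
    simp only [PowerSeries.coeff_mk]
    calc ∏ i : σ, (X i : MvPolynomial σ R) ^ l i
        = ∏ a ∈ l.support, (X a : MvPolynomial σ R) ^ l a :=
          (Finset.prod_subset (Finset.subset_univ _)
            (fun x _ hx => by rw [Finsupp.notMem_support_iff.mp hx, pow_zero])).symm
      _ = (l.toMultiset.map X).prod := by
          rw [Finset.prod_multiset_map_count]
          rw [Finsupp.toFinset_toMultiset]
          exact Finset.prod_congr rfl fun a _ => by rw [Finsupp.count_toMultiset]

lemma newton (n : ℕ) :
    ∑ ij ∈ antidiagonal n,
      ((-1 : MvPolynomial σ R) ^ ij.1 * esymm σ R ij.1 * hsymm σ R ij.2) =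
      if n = 0 then 1 else 0 := by
  have hEH : (∏ i : σ, (1 - PowerSeries.C (X i : MvPolynomial σ R) * PowerSeries.X)) *
      (∏ i : σ, PowerSeries.mk fun m => (X i : MvPolynomial σ R) ^ m) = 1 := by
    rw [← Finset.prod_mul_distrib]
    rw [Finset.prod_congr rfl (fun i _ => geom (X i : MvPolynomial σ R))]
    simp
  have := congrArg (PowerSeries.coeff n) hEH
  rw [PowerSeries.coeff_mul] at this
  rw [Finset.sum_congr rfl (fun ij _ => by rw [coeff_E, coeff_H])] at this
  rw [this, PowerSeries.coeff_one]

end Helpers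

def comps : ℕ → Finset (List ℕ)
  | 0 => {[]}
  | (a+1) => (Finset.range (a+1)).attach.biUnion fun j =>
      (comps j.1).image (fun c => (a + 1 - j.1) :: c)
decreasing_by exact Finset.mem_range.mp j.2

lemma mem_comps (n : ℕ) (c : List ℕ) :
    c ∈ comps n ↔ (∀ b ∈ c, 0 < b) ∧ c.sum = n := by
  induction n using Nat.strong_induction_on generalizing c with
  | _ n ih =>
    match n with
    | 0 =>
      simp only [comps, Finset.mem_singleton]
      constructor
      · rintro rfl; simp
      · rintro ⟨h1, h2⟩
        cases c with
        | nil => rfl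
        | cons x xs =>
          exfalso
          have := h1 x (by simp)
          simp [List.sum_cons] at h2
          omega
    | (a+1) =>
      simp only [comps, Finset.mem_biUnion, Finset.mem_attach, Finset.mem_image, true_and,
        Subtype.exists]
      constructor
      · rintro ⟨j, hj, c', hc', rfl⟩
        have hj' := Finset.mem_range.mp hj
        obtain ⟨h1, h2⟩ := (ih j hj' c').mp hc'
        refine ⟨?_, ?_⟩
        · intro b hb
          rcases List.mem_cons.mp hb with rfl | hb
          · omega
          · exact h1 b hb
        · simp [List.sum_cons, h2]; omega
      · rintro ⟨h1, h2⟩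
        cases c with
        | nil => simp at h2
        | cons x xs =>
          have hx : 0 < x := h1 x (by simp)
          have hsum : x + xs.sum = a + 1 := by simpa [List.sum_cons] using h2
          refine ⟨xs.sum, Finset.mem_range.mpr (by omega), xs,
            (ih xs.sum (by omega) xs).mpr ⟨fun b hb => h1 b (by simp [hb]), rfl⟩, ?_⟩
          congr 1
          omega

lemma sum_comps_succ {M : Type*} [AddCommMonoid M] (a : ℕ) (f : List ℕ → M) :
    ∑ c ∈ comps (a+1), f c = ∑ j ∈ range (a+1), ∑ c ∈ comps j, f ((a+1-j) :: c) := by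
  rw [comps]
  rw [Finset.sum_biUnion]
  · rw [← Finset.sum_attach (range (a+1)) (fun j => ∑ c ∈ comps j, f ((a+1-j) :: c))]
    refine Finset.sum_congr rfl fun j _ => ?_
    rw [Finset.sum_image]
    intro x _ y _ h
    exact (List.cons.injEq _ _ _ _ ▸ h).2
  · intro x _ y _ hxy
    simp only [Function.onFun]
    rw [Finset.disjoint_left]
    rintro c hc hc'
    obtain ⟨cx, _, rfl⟩ := Finset.mem_image.mp hc
    obtain ⟨cy, _, h⟩ := Finset.mem_image.mp hc'
    have hx := Finset.mem_range.mp x.2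
    have hy := Finset.mem_range.mp y.2
    have : a + 1 - y.1 = a + 1 - x.1 := (List.cons.injEq _ _ _ _ ▸ h).1
    exact hxy (Subtype.ext (by omega)).symm

section Helpers2
variable {σ : Type*} [Fintype σ] [DecidableEq σ] {R : Type*} [CommRing R]

lemma hsymm_eq_sum_comps (n : ℕ) :
    hsymm σ R n = ∑ c ∈ comps n,
      (-1 : MvPolynomial σ R) ^ (n + c.length) * (c.map (esymm σ R)).prod := by
  induction n using Nat.strong_induction_on with
  | _ n ih =>
    match n with
    | 0 => simp [comps]
    | (a+1) =>
      have hN := newton (σ := σ) (R := R) (a+1)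
      rw [Finset.Nat.sum_antidiagonal_eq_sum_range_succ_mk, Finset.sum_range_succ'] at hN
      simp only [if_neg (Nat.succ_ne_zero a), pow_zero, esymm_zero, one_mul,
        Nat.sub_zero, Nat.succ_sub_succ] at hN
      have key : hsymm σ R (a+1) =
          ∑ i ∈ range (a+1), (-1 : MvPolynomial σ R) ^ i * esymm σ R (i+1) * hsymm σ R (a-i) := by
        have h2 : ∑ i ∈ range (a+1), (-1 : MvPolynomial σ R) ^ (i+1) * esymm σ R (i+1) *
            hsymm σ R (a-i) =
            - ∑ i ∈ range (a+1), (-1 : MvPolynomial σ R) ^ i * esymm σ R (i+1) * hsymm σ R (a-i) := by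
          rw [← Finset.sum_neg_distrib]
          exact Finset.sum_congr rfl fun i _ => by rw [pow_succ]; ring
        rw [h2] at hN
        linear_combination hN
      rw [key, sum_comps_succ, ← Finset.sum_range_reflect]
      refine Finset.sum_congr rfl fun j hj => ?_
      have hj' : j ≤ a := by have := Finset.mem_range.mp hj; omega
      rw [show a + 1 - 1 - j = a - j from by omega, Nat.sub_sub_self hj',
        show a - j + 1 = a + 1 - j from by omega]
      rw [ih j (by omega), Finset.mul_sum]
      refine Finset.sum_congr rfl fun c hc => ?_
      rw [List.map_cons, List.prod_cons,
        show (a+1) + ((a+1-j)::c).length = (a - j) + (j + c.length) + 2 from by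
          simp [List.length_cons]; omega,
        pow_add, pow_add]
      ring

def tabs : List ℕ → Finset (List (List ℕ))
  | [] => {[]}
  | a :: L => (comps a ×ˢ tabs L).image fun p => p.1 :: p.2

lemma mem_tabs (L : List ℕ) (F : List (List ℕ)) :
    F ∈ tabs L ↔ F.map List.sum = L ∧ ∀ b ∈ F.flatten, 0 < b := by
  induction L generalizing F with
  | nil =>
    simp only [tabs, Finset.mem_singleton]
    constructor
    · rintro rfl; simp
    · rintro ⟨h1, _⟩
      cases F with
      | nil => rfl
      | cons x xs => simp at h1
  | cons a L ih =>
    simp only [tabs, Finset.mem_image, Finset.mem_product, Prod.exists]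
    constructor
    · rintro ⟨c, G, ⟨hc, hG⟩, rfl⟩
      obtain ⟨h1, h2⟩ := (mem_comps a c).mp hc
      obtain ⟨h3, h4⟩ := (ih G).mp hG
      refine ⟨by simp [h2, h3], ?_⟩
      intro b hb
      rw [List.flatten_cons, List.mem_append] at hb
      rcases hb with hb | hb
      · exact h1 b hb
      · exact h4 b hb
    · rintro ⟨h1, h2⟩
      cases F with
      | nil => simp at h1
      | cons c G =>
        simp only [List.map_cons, List.cons.injEq] at h1
        refine ⟨c, G, ⟨(mem_comps a c).mpr ⟨fun b hb => h2 b (by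
            rw [List.flatten_cons, List.mem_append]; exact Or.inl hb), h1.1⟩,
          (ih G).mpr ⟨h1.2, fun b hb => h2 b (by
            rw [List.flatten_cons, List.mem_append]; exact Or.inr hb)⟩⟩, rfl⟩

lemma prod_hsymm_eq (L : List ℕ) :
    (L.map (hsymm σ R)).prod = ∑ F ∈ tabs L,
      (-1 : MvPolynomial σ R) ^ (L.sum + F.flatten.length) * (F.flatten.map (esymm σ R)).prod := by
  induction L with
  | nil => simp [tabs]
  | cons a L ih =>
    rw [List.map_cons, List.prod_cons, hsymm_eq_sum_comps, ih, Finset.sum_mul_sum]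
    rw [show tabs (a :: L) = (comps a ×ˢ tabs L).image (fun p => p.1 :: p.2) from rfl]
    rw [Finset.sum_image (fun p _ q _ h => by
      obtain ⟨c, G⟩ := p; obtain ⟨c', G'⟩ := q
      simpa [Prod.ext_iff] using h)]
    rw [Finset.sum_product]
    refine Finset.sum_congr rfl fun c hc => Finset.sum_congr rfl fun G hG => ?_
    rw [List.flatten_cons, List.map_append, List.prod_append,
      show (a :: L).sum + (c ++ G.flatten).length
        = (a + c.length) + (L.sum + G.flatten.length) from by
        simp [List.sum_cons, List.length_append]; omega,
      pow_add]
    ring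

end Helpers2

lemma card_parts_le {n : ℕ} (lam : Nat.Partition n) : lam.parts.card ≤ n := by
  have h := Multiset.card_nsmul_le_sum (fun x hx => lam.parts_pos hx)
  simpa [lam.parts_sum] using h

open MvPolynomial in
/-- The Eğecioğlu–Remmel brick tabloid expansion
`h_μ = ∑_{λ ⊢ n} (-1)^{n - ℓ(λ)} |B_{λ,μ}| e_λ` of the complete homogeneous symmetric
functions in terms of the elementary ones (stated in `N` variables for every `N`). -/
theorem brick_tabloid_expansion (N n : ℕ) (mu : Nat.Partition n) :
    hsymmPart (Fin N) ℤ mu =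
      ∑ lam : Nat.Partition n,
        C ((-1 : ℤ) ^ (n - lam.parts.card) * brickTabloidCount lam mu) *
          esymmPart (Fin N) ℤ lam := by
  classical
  set L : List ℕ := mu.parts.sort (· ≤ ·) with hLdef
  have hL : (↑L : Multiset ℕ) = mu.parts := mu.parts.sort_eq _
  have hsum : L.sum = n := by
    have h := mu.parts_sum
    rw [← hL, Multiset.sum_coe] at h
    exact h
  have h1 : hsymmPart (Fin N) ℤ mu = (L.map (hsymm (Fin N) ℤ)).prod := by
    rw [hsymmPart, ← hL, Multiset.map_coe, Multiset.prod_coe]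
  rw [h1, prod_hsymm_eq, hsum]
  set φ : List (List ℕ) → Nat.Partition n := fun F =>
    if h : (∀ b ∈ F.flatten, 0 < b) ∧ (↑F.flatten : Multiset ℕ).sum = n then
      ⟨↑F.flatten, fun {i} hi => h.1 i (by simpa using hi), h.2⟩
    else Nat.Partition.indiscrete n with hφ
  rw [← Finset.sum_fiberwise_of_maps_to (g := φ) (t := Finset.univ)
    (fun F _ => Finset.mem_univ _)]
  refine Finset.sum_congr rfl fun lam _ => ?_
  have hmem : ∀ F, F ∈ Finset.filter (fun F => φ F = lam) (tabs L) ↔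
      (F.map List.sum = L ∧ (∀ b ∈ F.flatten, 0 < b) ∧
        (↑F.flatten : Multiset ℕ) = lam.parts) := by
    intro F
    rw [Finset.mem_filter, mem_tabs]
    have hfl : F.map List.sum = L → (↑F.flatten : Multiset ℕ).sum = n := fun hmap => by
      rw [Multiset.sum_coe, List.sum_flatten, hmap, hsum]
    constructor
    · rintro ⟨⟨hmap, hpos⟩, hφF⟩
      rw [hφ] at hφF
      simp only at hφF
      rw [dif_pos ⟨hpos, hfl hmap⟩] at hφF
      exact ⟨hmap, hpos, congrArg Nat.Partition.parts hφF⟩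
    · rintro ⟨hmap, hpos, hparts⟩
      refine ⟨⟨hmap, hpos⟩, ?_⟩
      rw [hφ]
      simp only
      rw [dif_pos ⟨hpos, hfl hmap⟩]
      exact Nat.Partition.ext hparts
  have hcard : (Finset.filter (fun F => φ F = lam) (tabs L)).card =
      brickTabloidCount lam mu := by
    rw [brickTabloidCount, ← Nat.card_eq_finsetCard]
    exact Nat.card_congr (Equiv.subtypeEquivRight hmem)
  have hconst : ∀ F ∈ Finset.filter (fun F => φ F = lam) (tabs L),
      (-1 : MvPolynomial (Fin N) ℤ) ^ (n + F.flatten.length) *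
        (F.flatten.map (esymm (Fin N) ℤ)).prod =
      (-1 : MvPolynomial (Fin N) ℤ) ^ (n + lam.parts.card) * esymmPart (Fin N) ℤ lam := by
    intro F hF
    obtain ⟨hmap, hpos, hparts⟩ := (hmem F).mp hF
    have hlen : F.flatten.length = lam.parts.card := by
      rw [← hparts, Multiset.coe_card]
    have hprod : esymmPart (Fin N) ℤ lam = (F.flatten.map (esymm (Fin N) ℤ)).prod := by
      rw [esymmPart, ← hparts, Multiset.map_coe, Multiset.prod_coe]
    rw [hlen, hprod]
  rw [Finset.sum_congr rfl hconst, Finset.sum_const, hcard]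
  have hle := card_parts_le lam
  have hsign : (-1 : MvPolynomial (Fin N) ℤ) ^ (n + lam.parts.card) =
      C ((-1 : ℤ) ^ (n - lam.parts.card)) := by
    rw [show n + lam.parts.card = (n - lam.parts.card) + 2 * lam.parts.card from by omega,
      pow_add, pow_mul, neg_one_sq, one_pow, mul_one, map_pow, map_neg, map_one]
  rw [hsign, nsmul_eq_mul, map_mul]
  rw [show ((brickTabloidCount lam mu : ℕ) : MvPolynomial (Fin N) ℤ) =
    C ((brickTabloidCount lam mu : ℤ)) from (map_natCast (C : ℤ →+* MvPolynomial (Fin N) ℤ) _).symm ]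
  ring
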